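/- Let f : 𝔻 → 𝔻 be a proper holomorphic map of degree d, 0 < δ < 1/4, and x ∈ 𝔻 a point whose hyperbolic distance to every critical point of f exceeds 32dδ. Then (1-|x|²)/(1-|f(x)|²) · |f'(x)| ≥ δ^{d-1}. -/

import Mathlib

open Metric Finset Polynomial

/-- The hyperbolic (Poincaré) distance on the unit disk. -/
noncomputable def diskDist (a b : ℂ) : ℝ :=
  Real.log ((1 + ‖(a - b) / (1 - (starRingEnd ℂ) b * a)‖) /
    (1 - ‖(a - b) / (1 - (starRingEnd ℂ) b * a)‖))

namespace BlaschkeAux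

/-- A polynomial vanishing on the unit circle is zero. -/
lemma eq_zero_of_circle_roots (D : Polynomial ℂ)
    (h : ∀ z : ℂ, ‖z‖ = 1 → D.IsRoot z) : D = 0 := by
  apply Polynomial.eq_zero_of_infinite_isRoot
  apply Set.infinite_of_injective_forall_mem
    (f := fun n : ℕ => (1 + (n : ℂ) * Complex.I) / (1 - (n : ℂ) * Complex.I))
  case hi =>
    intro n m hnm
    have hn : (1 - (n : ℂ) * Complex.I) ≠ 0 := by
      intro hcon
      have := congrArg Complex.re hcon
      simp at this
    have hm : (1 - (m : ℂ) * Complex.I) ≠ 0 := by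
      intro hcon
      have := congrArg Complex.re hcon
      simp at this
    rw [div_eq_div_iff hn hm] at hnm
    have h2 : ((n : ℂ) - m) * Complex.I = ((m : ℂ) - n) * Complex.I := by ring_nf at hnm ⊢; linear_combination hnm
    have h3 : ((n : ℂ)) = m := by
      have := mul_right_cancel₀ Complex.I_ne_zero h2
      linear_combination this / 2
    exact_mod_cast h3
  case hf =>
    intro n
    apply h
    have hne : (1 - (n : ℂ) * Complex.I) ≠ 0 := by
      intro hcon
      have := congrArg Complex.re hcon
      simp at this
    rw [norm_div]
    have h1 : ‖1 + (n : ℂ) * Complex.I‖ = ‖1 - (n : ℂ) * Complex.I‖ := by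
      rw [Complex.norm_def, Complex.norm_def]
      congr 1
      simp [Complex.normSq_apply]
    rw [h1, div_self (fun hc => hne (by exact norm_eq_zero.mp hc))]

/-- On the unit circle, `1 - conj w * z = z * conj (z - w)`. -/
lemma circle_conj_eq {z : ℂ} (hz : ‖z‖ = 1) (w : ℂ) :
    1 - (starRingEnd ℂ) w * z = z * (starRingEnd ℂ) (z - w) := by
  have h1 : z * (starRingEnd ℂ) z = 1 := by
    rw [Complex.mul_conj]
    norm_cast
    rw [← Complex.sq_norm, hz]; norm_num
  calc 1 - (starRingEnd ℂ) w * z = z * (starRingEnd ℂ) z - z * (starRingEnd ℂ) w := by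
        rw [h1]; ring
    _ = z * (starRingEnd ℂ) (z - w) := by rw [map_sub]; ring

/-- On the unit circle, `(z - w) * (1 - conj w * z) = z * normSq (z - w)`. -/
lemma circle_factor {z : ℂ} (hz : ‖z‖ = 1) (w : ℂ) :
    (z - w) * (1 - (starRingEnd ℂ) w * z) = z * ((Complex.normSq (z - w) : ℝ) : ℂ) := by
  rw [circle_conj_eq hz w]
  have : (z - w) * (z * (starRingEnd ℂ) (z - w)) = z * ((z - w) * (starRingEnd ℂ) (z - w)) := by ring
  rw [this, Complex.mul_conj]

/-- Key identity: `normSq (1 - conj w * z) - normSq (z - w) = (1 - normSq w) (1 - normSq z)`. -/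
lemma normSq_sub_identity (w z : ℂ) :
    Complex.normSq (1 - (starRingEnd ℂ) w * z) - Complex.normSq (z - w)
      = (1 - Complex.normSq w) * (1 - Complex.normSq z) := by
  simp only [Complex.normSq_apply, Complex.sub_re, Complex.sub_im, Complex.mul_re,
    Complex.mul_im, Complex.one_re, Complex.one_im, Complex.conj_re, Complex.conj_im]
  ring

/-- Telescoping product-difference identity. -/
lemma telescope (n : ℕ) (u v : ℕ → ℝ) :
    (∏ k ∈ range n, v k) - ∏ k ∈ range n, u k
      = ∑ i ∈ range n, (v i - u i) * (∏ k ∈ range i, u k) * ∏ k ∈ Finset.Ico (i + 1) n, v k := by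
  induction n with
  | zero => simp
  | succ n ih =>
    rw [Finset.sum_range_succ, Finset.prod_range_succ, Finset.prod_range_succ]
    have hrw : ∀ i ∈ range n, (v i - u i) * (∏ k ∈ range i, u k) * ∏ k ∈ Finset.Ico (i + 1) (n + 1), v k
        = ((v i - u i) * (∏ k ∈ range i, u k) * ∏ k ∈ Finset.Ico (i + 1) n, v k) * v n := by
      intro i hi
      rw [Finset.prod_Ico_succ_top (by simp only [Finset.mem_range] at hi; omega)]
      ring
    rw [Finset.sum_congr rfl hrw, ← Finset.sum_mul, ← ih]
    simp [Finset.Ico_self]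
    ring

/-- Splitting an erased range into lower and upper parts. -/
lemma erase_range_split {M : Type*} [CommMonoid M] (F : ℕ → M) {d i : ℕ} (hi : i < d) :
    ∏ k ∈ (range d).erase i, F k = (∏ k ∈ range i, F k) * ∏ k ∈ Finset.Ico (i + 1) d, F k := by
  have hset : (range d).erase i = (range i) ∪ Finset.Ico (i + 1) d := by
    ext k
    simp only [Finset.mem_erase, Finset.mem_range, Finset.mem_union, Finset.mem_Ico]
    omega
  rw [hset, Finset.prod_union]
  rw [Finset.disjoint_left]
  intro k hk hk'
  simp only [Finset.mem_range] at hk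
  simp only [Finset.mem_Ico] at hk'
  omega


lemma refl_eval {Q : Polynomial ℂ} {N : ℕ} (hdeg : Q.natDegree ≤ N) (z : ℂ) (hz : z ≠ 0) :
    (∑ k ∈ range (N + 1), C ((starRingEnd ℂ) (Q.coeff k)) * X ^ (N - k)).eval z
      = z ^ N * (starRingEnd ℂ) (Q.eval (((starRingEnd ℂ) z)⁻¹)) := by
  rw [Polynomial.eval_finset_sum, Polynomial.eval_eq_sum_range' (Nat.lt_succ_of_le hdeg), map_sum,
    Finset.mul_sum]
  refine Finset.sum_congr rfl fun k hk => ?_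
  have hkN : k ≤ N := Finset.mem_range_succ_iff.mp hk
  simp only [Polynomial.eval_mul, Polynomial.eval_pow, Polynomial.eval_C, Polynomial.eval_X]
  rw [map_mul, map_pow, map_inv₀, Complex.conj_conj, inv_pow, pow_sub₀ z hz hkN]
  field_simp

lemma one_sub_conj_mul_ne_zero {w z : ℂ} (hw : ‖w‖ < 1) (hz : ‖z‖ ≤ 1) :
    1 - (starRingEnd ℂ) w * z ≠ 0 := by
  intro hcon
  have h1 : (1 : ℂ) = (starRingEnd ℂ) w * z := by linear_combination hcon
  have h2 := congrArg (‖·‖) h1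
  rw [norm_one, norm_mul, Complex.norm_conj] at h2
  nlinarith [norm_nonneg w, norm_nonneg z]

lemma derivative_finset_prod (s : Finset ℕ) (g : ℕ → Polynomial ℂ) :
    Polynomial.derivative (∏ k ∈ s, g k)
      = ∑ i ∈ s, (∏ j ∈ s.erase i, g j) * Polynomial.derivative (g i) := by
  induction s using Finset.induction_on with
  | empty => simp
  | @insert a s hnotmem ih =>
    rw [Finset.prod_insert hnotmem, Polynomial.derivative_mul, ih, Finset.sum_insert hnotmem,
      Finset.erase_insert hnotmem, Finset.mul_sum]
    congr 1
    · ring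
    · refine Finset.sum_congr rfl fun i hi => ?_
      have hia : i ≠ a := by rintro rfl; exact hnotmem hi
      rw [Finset.erase_insert_of_ne hia.symm, Finset.prod_insert (fun hmem => hnotmem (Finset.mem_of_mem_erase hmem))]
      ring

theorem blaschke_factor (m : ℕ) : ∀ Q : Polynomial ℂ, Q.natDegree ≤ 2 * m →
    (∀ z : ℂ, ‖z‖ = 1 → ∃ r : ℝ, 0 < r ∧ Q.eval z = (r : ℂ) * z ^ m) →
    ∃ (κ : ℝ) (c : Fin m → ℂ), 0 < κ ∧ (∀ j, ‖c j‖ < 1) ∧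
      Q = C ((κ : ℝ) : ℂ) * ∏ j, ((X - C (c j)) * (1 - C ((starRingEnd ℂ) (c j)) * X)) := by
  induction m with
  | zero =>
    intro Q hdeg hpos
    obtain ⟨r, hr, hev⟩ := hpos 1 (by simp)
    refine ⟨r, fun i => i.elim0, hr, fun j => j.elim0, ?_⟩
    have hQC := Polynomial.eq_C_of_natDegree_le_zero (p := Q) (by simpa using hdeg)
    rw [hQC]
    simp only [Finset.univ_eq_empty, Finset.prod_empty, mul_one]
    rw [Polynomial.coeff_zero_eq_eval_zero]
    congr 1
    have h0 : Q.eval 0 = Q.eval 1 := by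
      rw [hQC]; simp
    rw [h0, hev]; simp
  | succ m ih =>
    intro Q hdeg hpos
    set N := 2 * (m + 1) with hN
    have hQne : Q ≠ 0 := by
      intro hcon
      obtain ⟨r, hr, hev⟩ := hpos 1 (by simp)
      rw [hcon] at hev
      have : (r : ℂ) = 0 := by simpa using hev.symm
      exact hr.ne' (by exact_mod_cast this)
    -- reflection symmetry
    have hQQref : Q = ∑ k ∈ range (N + 1), C ((starRingEnd ℂ) (Q.coeff k)) * X ^ (N - k) := by
      have := eq_zero_of_circle_roots
        (Q - ∑ k ∈ range (N + 1), C ((starRingEnd ℂ) (Q.coeff k)) * X ^ (N - k)) ?_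
      · linear_combination this
      intro z hz
      have hz0 : z ≠ 0 := by intro h; rw [h] at hz; simp at hz
      have hzinv : ((starRingEnd ℂ) z)⁻¹ = z := by
        refine inv_eq_of_mul_eq_one_right ?_
        rw [mul_comm, Complex.mul_conj]
        norm_cast
        rw [← Complex.sq_norm, hz]; norm_num
      have hzz : z * (starRingEnd ℂ) z = 1 := by
        rw [Complex.mul_conj]; norm_cast; rw [← Complex.sq_norm, hz]; norm_num
      obtain ⟨r, hr, hev⟩ := hpos z hz
      simp only [Polynomial.IsRoot, Polynomial.eval_sub]
      rw [refl_eval hdeg z hz0, hzinv, hev]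
      rw [map_mul, map_pow]
      have : (starRingEnd ℂ) ((r : ℝ) : ℂ) = ((r : ℝ) : ℂ) := Complex.conj_ofReal r
      rw [this]
      have hpow : z ^ N * ((starRingEnd ℂ) z) ^ (m + 1) = z ^ (m + 1) := by
        have : z ^ N = z ^ (m + 1) * z ^ (m + 1) := by rw [← pow_add]; congr 1; omega
        rw [this, mul_assoc, ← mul_pow, hzz, one_pow, mul_one]
      calc (r : ℂ) * z ^ (m + 1) - z ^ N * ((r : ℂ) * ((starRingEnd ℂ) z) ^ (m + 1))
          = (r : ℂ) * (z ^ (m + 1) - z ^ N * ((starRingEnd ℂ) z) ^ (m + 1)) := by ring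
        _ = 0 := by rw [hpow]; ring
    have coeffN : Q.coeff N = (starRingEnd ℂ) (Q.coeff 0) := by
      conv_lhs => rw [hQQref]
      rw [Polynomial.finset_sum_coeff]
      have : ∀ k ∈ range (N + 1),
          (C ((starRingEnd ℂ) (Q.coeff k)) * X ^ (N - k)).coeff N
            = if k = 0 then (starRingEnd ℂ) (Q.coeff k) else 0 := by
        intro k hk
        rw [Polynomial.coeff_C_mul, Polynomial.coeff_X_pow]
        have hkN : k ≤ N := Finset.mem_range_succ_iff.mp hk
        by_cases h : k = 0
        · subst h; simp
        · have : ¬(N = N - k) := by omega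
          simp [this, h]
      rw [Finset.sum_congr rfl this, Finset.sum_ite_eq' (range (N + 1)) 0]
      simp
    have hevalrefl : ∀ w : ℂ, w ≠ 0 →
        Q.eval w = w ^ N * (starRingEnd ℂ) (Q.eval (((starRingEnd ℂ) w)⁻¹)) := by
      intro w hw
      conv_lhs => rw [hQQref]
      exact refl_eval hdeg w hw
    by_cases hc0 : Q.coeff 0 = 0
    · -- zero root case
      obtain ⟨Q₁, hQ₁⟩ := Polynomial.X_dvd_iff.mpr hc0
      have hQ₁ne : Q₁ ≠ 0 := by intro h; rw [h, mul_zero] at hQ₁; exact hQne hQ₁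
      have hdegQ : Q.natDegree ≤ N - 1 := by
        refine Polynomial.natDegree_le_iff_coeff_eq_zero.mpr fun j hj => ?_
        rcases eq_or_lt_of_le (Nat.succ_le_of_lt hj) with h | h
        · rw [show j = N by omega, coeffN, hc0, map_zero]
        · exact Polynomial.coeff_eq_zero_of_natDegree_lt (lt_of_le_of_lt hdeg (by omega))
      have hdeg₁ : Q₁.natDegree ≤ 2 * m := by
        have : Q.natDegree = 1 + Q₁.natDegree := by
          rw [hQ₁, Polynomial.natDegree_mul Polynomial.X_ne_zero hQ₁ne, Polynomial.natDegree_X]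
        omega
      have hpos₁ : ∀ z : ℂ, ‖z‖ = 1 → ∃ r : ℝ, 0 < r ∧ Q₁.eval z = (r : ℂ) * z ^ m := by
        intro z hz
        have hz0 : z ≠ 0 := by intro h; rw [h] at hz; simp at hz
        obtain ⟨r, hr, hev⟩ := hpos z hz
        refine ⟨r, hr, ?_⟩
        rw [hQ₁] at hev
        simp only [Polynomial.eval_mul, Polynomial.eval_X] at hev
        have : z * Q₁.eval z = z * ((r : ℂ) * z ^ m) := by rw [hev]; ring
        exact mul_left_cancel₀ hz0 this
      obtain ⟨κ, cs, hκ, hcs, hfac⟩ := ih Q₁ hdeg₁ hpos₁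
      refine ⟨κ, Fin.cons 0 cs, hκ, ?_, ?_⟩
      · intro j
        refine Fin.cases ?_ ?_ j
        · simp
        · intro i; simp [hcs i]
      · rw [Fin.prod_univ_succ]
        simp only [Fin.cons_zero, Fin.cons_succ, map_zero, sub_zero, zero_mul, sub_zero, mul_one]
        rw [hQ₁, hfac]
        ring
    · -- nonzero constant term: degree is exactly N, pick a root
      have hcc : (starRingEnd ℂ) (Q.coeff 0) ≠ 0 := by simpa using hc0
      have hNdeg : Q.natDegree = N :=
        le_antisymm hdeg (Polynomial.le_natDegree_of_ne_zero (coeffN ▸ hcc))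
      have hdegpos : 0 < Q.degree := by
        rw [Polynomial.degree_eq_natDegree hQne]
        exact_mod_cast by omega
      obtain ⟨z₀, hz₀⟩ := Complex.exists_root hdegpos
      have hz₀0 : z₀ ≠ 0 := by
        intro h
        rw [h] at hz₀
        exact hc0 (by rwa [Polynomial.coeff_zero_eq_eval_zero])
      have habs : ‖z₀‖ ≠ 1 := by
        intro h
        obtain ⟨r, hr, hev⟩ := hpos z₀ h
        rw [hz₀] at hev
        have : (r : ℂ) = 0 ∨ z₀ ^ (m + 1) = 0 := mul_eq_zero.mp hev.symm
        rcases this with h | h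
        · exact absurd (by exact_mod_cast h) (ne_of_gt hr)
        · exact hz₀0 (pow_eq_zero_iff (by omega) |>.mp h)
      obtain ⟨c₀, hc₀lt, hc₀ne, hc₀root⟩ : ∃ c₀ : ℂ,
          ‖c₀‖ < 1 ∧ c₀ ≠ 0 ∧ Q.IsRoot c₀ := by
        rcases lt_or_gt_of_ne habs with hlt | hgt
        · exact ⟨z₀, hlt, hz₀0, hz₀⟩
        · have hcz : (starRingEnd ℂ) z₀ ≠ 0 := by simpa using hz₀0
          refine ⟨((starRingEnd ℂ) z₀)⁻¹, ?_, inv_ne_zero hcz, ?_⟩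
          · rw [norm_inv, Complex.norm_conj]
            rw [inv_lt_one_iff₀]
            right; exact hgt
          · have := hevalrefl ((starRingEnd ℂ) z₀)⁻¹ (inv_ne_zero hcz)
            rw [Polynomial.IsRoot, this]
            have : ((starRingEnd ℂ) (((starRingEnd ℂ) z₀)⁻¹))⁻¹ = z₀ := by
              rw [map_inv₀, Complex.conj_conj, inv_inv]
            rw [this, hz₀]
            simp
      -- the reflected point is also a root
      have hccne : (starRingEnd ℂ) c₀ ≠ 0 := by simpa using hc₀ne
      have hc₀'root : Q.IsRoot (((starRingEnd ℂ) c₀)⁻¹) := by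
        have := hevalrefl ((starRingEnd ℂ) c₀)⁻¹ (inv_ne_zero hccne)
        rw [Polynomial.IsRoot, this]
        have h2 : ((starRingEnd ℂ) (((starRingEnd ℂ) c₀)⁻¹))⁻¹ = c₀ := by
          rw [map_inv₀, Complex.conj_conj, inv_inv]
        rw [h2, hc₀root]
        simp
      have habs0 : 0 < ‖c₀‖ := by
        simpa [norm_pos_iff] using hc₀ne
      have hne2 : c₀ ≠ ((starRingEnd ℂ) c₀)⁻¹ := by
        intro h
        have : ‖c₀‖ = (‖c₀‖)⁻¹ := by
          conv_lhs => rw [h]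
          rw [norm_inv, Complex.norm_conj]
        have h1 : ‖c₀‖ * ‖c₀‖ = 1 := by
          field_simp at this
          nlinarith [this]
        nlinarith [hc₀lt, habs0]
      obtain ⟨S, hS⟩ := (Polynomial.dvd_iff_isRoot).mpr hc₀root
      have hSroot : S.IsRoot (((starRingEnd ℂ) c₀)⁻¹) := by
        have := hc₀'root
        rw [Polynomial.IsRoot, hS, Polynomial.eval_mul] at this
        rcases mul_eq_zero.mp this with h | h
        · exfalso
          apply hne2
          simp only [Polynomial.eval_sub, Polynomial.eval_X, Polynomial.eval_C] at h
          exact (sub_eq_zero.mp h).symm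
        · exact h
      obtain ⟨T, hT⟩ := (Polynomial.dvd_iff_isRoot).mpr hSroot
      set Q₁ : Polynomial ℂ := C (-((starRingEnd ℂ) c₀)⁻¹) * T with hQ₁def
      have hkey : X - C (((starRingEnd ℂ) c₀)⁻¹)
          = (1 - C ((starRingEnd ℂ) c₀) * X) * C (-((starRingEnd ℂ) c₀)⁻¹) := by
        have h1 : (starRingEnd ℂ) c₀ * (-((starRingEnd ℂ) c₀)⁻¹) = -1 := by
          field_simp
        rw [sub_mul, one_mul, mul_right_comm, ← Polynomial.C_mul, h1]
        simp only [map_neg, Polynomial.C_1, neg_mul, one_mul, map_inv₀]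
        ring_nf
      have hQfac : Q = (X - C c₀) * (1 - C ((starRingEnd ℂ) c₀) * X) * Q₁ := by
        rw [hQ₁def, hS, hT, hkey]
        ring
      have hQ₁ne : Q₁ ≠ 0 := by
        intro h
        rw [hQfac, h, mul_zero] at hQne
        exact hQne rfl
      have hTne : T ≠ 0 := by
        intro h; apply hQ₁ne; rw [hQ₁def, h, mul_zero]
      have hdeg₁ : Q₁.natDegree ≤ 2 * m := by
        have h1 : (X - C c₀).natDegree = 1 := Polynomial.natDegree_X_sub_C c₀
        have h2 : (1 - C ((starRingEnd ℂ) c₀) * X).natDegree = 1 := by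
          have : (1 : Polynomial ℂ) - C ((starRingEnd ℂ) c₀) * X
              = C (-((starRingEnd ℂ) c₀)) * X + C 1 := by
            simp only [map_neg, Polynomial.C_1]; ring
          rw [this]
          exact Polynomial.natDegree_linear (neg_ne_zero.mpr hccne)
        have h3 : (X - C c₀) ≠ 0 := Polynomial.X_sub_C_ne_zero c₀
        have h4 : (1 - C ((starRingEnd ℂ) c₀) * X) ≠ 0 := by
          intro h; rw [h] at h2; simp at h2
        have h5 : Q.natDegree = 1 + 1 + Q₁.natDegree := by
          rw [hQfac, Polynomial.natDegree_mul (mul_ne_zero h3 h4) hQ₁ne,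
            Polynomial.natDegree_mul h3 h4, h1, h2]
        omega
      have hpos₁ : ∀ z : ℂ, ‖z‖ = 1 → ∃ r : ℝ, 0 < r ∧ Q₁.eval z = (r : ℂ) * z ^ m := by
        intro z hz
        have hz0 : z ≠ 0 := by intro h; rw [h] at hz; simp at hz
        have hzc : z ≠ c₀ := by
          intro h; rw [← h] at hc₀lt; rw [hz] at hc₀lt; linarith
        have hnsq : 0 < Complex.normSq (z - c₀) := by
          rw [Complex.normSq_pos]; exact sub_ne_zero_of_ne hzc
        obtain ⟨r, hr, hev⟩ := hpos z hz
        refine ⟨r / Complex.normSq (z - c₀), div_pos hr hnsq, ?_⟩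
        rw [hQfac] at hev
        simp only [Polynomial.eval_mul, Polynomial.eval_sub, Polynomial.eval_one,
          Polynomial.eval_X, Polynomial.eval_C] at hev
        have hcf := circle_factor hz c₀
        have hev2 : z * ((Complex.normSq (z - c₀) : ℝ) : ℂ) * Q₁.eval z = (r : ℂ) * z ^ (m + 1) := by
          rw [← hcf]
          linear_combination hev
        have hcast : ((Complex.normSq (z - c₀) : ℝ) : ℂ) ≠ 0 := by
          exact_mod_cast hnsq.ne'
        rw [Complex.ofReal_div, div_mul_eq_mul_div, eq_div_iff hcast]
        refine mul_left_cancel₀ hz0 ?_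
        linear_combination hev2
      obtain ⟨κ, cs, hκ, hcs, hfac⟩ := ih Q₁ hdeg₁ hpos₁
      refine ⟨κ, Fin.cons c₀ cs, hκ, ?_, ?_⟩
      · intro j
        refine Fin.cases ?_ ?_ j
        · simpa using hc₀lt
        · intro i; simpa using hcs i
      · rw [Fin.prod_univ_succ]
        simp only [Fin.cons_zero, Fin.cons_succ]
        rw [hQfac, hfac]
        ring



end BlaschkeAux

set_option maxHeartbeats 2000000 in
open BlaschkeAux in
/-- If `x ∈ 𝔻` has hyperbolic distance greater than `32dδ` (with `0 < δ < 1/4`)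
to every critical point of a degree-`d` Blaschke product `f`, then the
hyperbolic derivative of `f` at `x` is at least `δ^(d-1)`. -/
theorem derivative_lower_bound_away_from_critical (d : ℕ) (hd : 1 ≤ d)
    (a : Fin d → ℂ) (ha : ∀ i, ‖a i‖ < 1)
    (c : ℂ) (hc : ‖c‖ = 1) (f : ℂ → ℂ)
    (hf : f = fun z => c * ∏ i, (z - a i) / (1 - (starRingEnd ℂ) (a i) * z))
    (δ : ℝ) (hδ0 : 0 < δ) (hδ : δ < 1 / 4)
    (x : ℂ) (hx : x ∈ ball (0 : ℂ) 1)
    (hfar : ∀ z ∈ ball (0 : ℂ) 1, deriv f z = 0 → 32 * d * δ < diskDist x z) :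
    δ ^ (d - 1) ≤ (1 - ‖x‖ ^ 2) / (1 - ‖f x‖ ^ 2)
        * ‖deriv f x‖ := by
  classical
  set m := d - 1 with hm
  have hdm : d = m + 1 := by omega
  set b : ℕ → ℂ := fun k => if h : k < d then a ⟨k, h⟩ else 0 with hbdef
  have hb : ∀ k, ‖b k‖ < 1 := by
    intro k; by_cases h : k < d
    · simp only [hbdef, dif_pos h]; exact ha _
    · simp [hbdef, h]
  set lam : ℕ → ℝ := fun k => 1 - Complex.normSq (b k) with hlamdef
  have hlam : ∀ k, 0 < lam k := by
    intro k
    have h1 := hb k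
    have h2 : Complex.normSq (b k) < 1 := by
      rw [← Complex.sq_norm]; nlinarith [norm_nonneg (b k)]
    simp only [hlamdef]; linarith
  set NP : Polynomial ℂ := ∏ k ∈ Finset.range d, (X - Polynomial.C (b k)) with hNPdef
  set DP : Polynomial ℂ :=
    ∏ k ∈ Finset.range d, (1 - Polynomial.C ((starRingEnd ℂ) (b k)) * X) with hDPdef
  have hfX : f = fun z => c * (NP.eval z / DP.eval z) := by
    rw [hf]
    funext z
    congr 1
    have hba : ∀ i : Fin d, b (i : ℕ) = a i := by
      intro i
      simp only [hbdef, dif_pos i.isLt, Fin.eta]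
    calc ∏ i : Fin d, (z - a i) / (1 - (starRingEnd ℂ) (a i) * z)
        = ∏ k ∈ Finset.range d, (z - b k) / (1 - (starRingEnd ℂ) (b k) * z) := by
          rw [← Fin.prod_univ_eq_prod_range
            (fun k => (z - b k) / (1 - (starRingEnd ℂ) (b k) * z)) d]
          exact Finset.prod_congr rfl fun i _ => by simp only [hba]
      _ = NP.eval z / DP.eval z := by
          rw [hNPdef, hDPdef, Polynomial.eval_prod, Polynomial.eval_prod,
            ← Finset.prod_div_distrib]
          refine Finset.prod_congr rfl fun k _ => ?_
          simp
  have hDPne : ∀ z : ℂ, ‖z‖ ≤ 1 → DP.eval z ≠ 0 := by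
    intro z hz
    rw [hDPdef, Polynomial.eval_prod]
    refine Finset.prod_ne_zero_iff.mpr fun j _ => ?_
    simp only [Polynomial.eval_sub, Polynomial.eval_one, Polynomial.eval_mul, Polynomial.eval_C,
      Polynomial.eval_X]
    intro hcon
    have h1 : (1 : ℂ) = (starRingEnd ℂ) (b j) * z := by linear_combination hcon
    have h2 := congrArg (‖·‖) h1
    rw [norm_one, norm_mul, Complex.norm_conj] at h2
    nlinarith [hb j, norm_nonneg (b j), norm_nonneg z]
  set P : Polynomial ℂ := ∑ i ∈ Finset.range d, Polynomial.C ((lam i : ℂ)) *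
      ∏ j ∈ (Finset.range d).erase i,
        ((X - Polynomial.C (b j)) * (1 - Polynomial.C ((starRingEnd ℂ) (b j)) * X)) with hPdef
  have hCl : ∀ i : ℕ, Polynomial.C ((lam i : ℂ))
      = 1 - Polynomial.C ((starRingEnd ℂ) (b i)) * Polynomial.C (b i) := by
    intro i
    rw [hlamdef]
    push_cast
    rw [map_sub, map_one, Complex.normSq_eq_conj_mul_self, map_mul]
  have hPder : Polynomial.derivative NP * DP - NP * Polynomial.derivative DP = P := by
    have hNP' : Polynomial.derivative NP
        = ∑ i ∈ Finset.range d, ∏ j ∈ (Finset.range d).erase i, (X - Polynomial.C (b j)) := by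
      rw [hNPdef, derivative_finset_prod]
      refine Finset.sum_congr rfl fun i _ => ?_
      rw [Polynomial.derivative_X_sub_C, mul_one]
    have hDP' : Polynomial.derivative DP = ∑ i ∈ Finset.range d,
        (∏ j ∈ (Finset.range d).erase i, (1 - Polynomial.C ((starRingEnd ℂ) (b j)) * X)) *
          (-Polynomial.C ((starRingEnd ℂ) (b i))) := by
      rw [hDPdef, derivative_finset_prod]
      refine Finset.sum_congr rfl fun i _ => ?_
      congr 1
      simp
    rw [hNP', hDP', hPdef, Finset.sum_mul, Finset.mul_sum, ← Finset.sum_sub_distrib]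
    refine Finset.sum_congr rfl fun i hi => ?_
    have e1 : NP = (X - Polynomial.C (b i)) *
        ∏ j ∈ (Finset.range d).erase i, (X - Polynomial.C (b j)) :=
      (Finset.mul_prod_erase _ _ hi).symm
    have e2 : DP = (1 - Polynomial.C ((starRingEnd ℂ) (b i)) * X) *
        ∏ j ∈ (Finset.range d).erase i, (1 - Polynomial.C ((starRingEnd ℂ) (b j)) * X) :=
      (Finset.mul_prod_erase _ _ hi).symm
    rw [e1, e2, Finset.prod_mul_distrib, hCl i]
    ring
  have hPevalp : ∀ p : ℂ, (Polynomial.derivative NP).eval p * DP.eval p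
      - NP.eval p * (Polynomial.derivative DP).eval p = P.eval p := by
    intro p
    have := congrArg (Polynomial.eval p) hPder
    simpa using this
  have hderiv : ∀ p : ℂ, ‖p‖ ≤ 1 →
      deriv f p = c * (P.eval p / (DP.eval p) ^ 2) := by
    intro p hp
    have h1 := NP.hasDerivAt p
    have h2 := DP.hasDerivAt p
    have hdiv := (h1.div h2 (hDPne p hp)).const_mul c
    rw [hfX]
    rw [show (fun z => c * (NP.eval z / DP.eval z)) = (fun y => c * ((fun x => NP.eval x) / fun x => DP.eval x) y) from rfl, hdiv.deriv]
    rw [← hPevalp p]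
  have hPeval : ∀ z : ℂ, ‖z‖ = 1 →
      P.eval z = ((∑ i ∈ Finset.range d, lam i *
        ∏ j ∈ (Finset.range d).erase i, Complex.normSq (z - b j) : ℝ) : ℂ) * z ^ m := by
    intro z hz
    have hcard : ∀ i ∈ Finset.range d, ((Finset.range d).erase i).card = m := by
      intro i hi
      rw [Finset.card_erase_of_mem hi, Finset.card_range]
    have hcast : ((∑ i ∈ Finset.range d, lam i *
        ∏ j ∈ (Finset.range d).erase i, Complex.normSq (z - b j) : ℝ) : ℂ) * z ^ m
        = ∑ i ∈ Finset.range d, (lam i : ℂ) *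
            ((∏ j ∈ (Finset.range d).erase i, ((Complex.normSq (z - b j) : ℝ) : ℂ)) * z ^ m) := by
      push_cast
      rw [Finset.sum_mul]
      exact Finset.sum_congr rfl fun i _ => by ring
    rw [hcast, hPdef, Polynomial.eval_finset_sum]
    refine Finset.sum_congr rfl fun i hi => ?_
    rw [Polynomial.eval_mul, Polynomial.eval_C, Polynomial.eval_prod]
    congr 1
    have hfac : ∀ j ∈ (Finset.range d).erase i,
        Polynomial.eval z ((X - Polynomial.C (b j)) *
          (1 - Polynomial.C ((starRingEnd ℂ) (b j)) * X))
          = z * ((Complex.normSq (z - b j) : ℝ) : ℂ) := by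
      intro j _
      have := circle_factor hz (b j)
      simpa using this
    rw [Finset.prod_congr rfl hfac, Finset.prod_mul_distrib, Finset.prod_const, hcard i hi]
    ring
  have hdegP : P.natDegree ≤ 2 * m := by
    rw [hPdef]
    refine Polynomial.natDegree_sum_le_of_forall_le _ _ fun i hi => ?_
    refine le_trans (Polynomial.natDegree_C_mul_le _ _) ?_
    refine le_trans (Polynomial.natDegree_prod_le _ _) ?_
    have hb2 : ∀ j ∈ (Finset.range d).erase i,
        ((X - Polynomial.C (b j)) *
          (1 - Polynomial.C ((starRingEnd ℂ) (b j)) * X)).natDegree ≤ 2 := by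
      intro j _
      refine le_trans Polynomial.natDegree_mul_le ?_
      have h1 : (X - Polynomial.C (b j)).natDegree ≤ 1 := Polynomial.natDegree_X_sub_C_le _
      have h2 : ((1 : Polynomial ℂ) - Polynomial.C ((starRingEnd ℂ) (b j)) * X).natDegree ≤ 1 := by
        refine le_trans (Polynomial.natDegree_sub_le _ _) ?_
        simp only [Polynomial.natDegree_one, max_le_iff]
        constructor
        · omega
        · refine le_trans (Polynomial.natDegree_C_mul_le _ _) ?_
          simp [Polynomial.natDegree_X]
      omega
    refine le_trans (Finset.sum_le_sum hb2) ?_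
    rw [Finset.sum_const, Finset.card_erase_of_mem hi, Finset.card_range, smul_eq_mul]
    omega
  have hPpos : ∀ z : ℂ, ‖z‖ = 1 → ∃ r : ℝ, 0 < r ∧ P.eval z = (r : ℂ) * z ^ m := by
    intro z hz
    refine ⟨_, ?_, hPeval z hz⟩
    have hzb : ∀ j, z - b j ≠ 0 := by
      intro j hcon
      have : z = b j := by linear_combination hcon
      rw [this] at hz
      exact absurd hz (ne_of_lt (hb j))
    refine Finset.sum_pos (fun i _ => ?_) ⟨0, by simp [hdm]⟩
    refine mul_pos (hlam i) (Finset.prod_pos fun j _ => ?_)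
    rw [Complex.normSq_pos]
    exact hzb j
  obtain ⟨κ, cp, hκ, hcp, hPfac⟩ := BlaschkeAux.blaschke_factor m P hdegP hPpos
  have hrho : ∀ j : Fin m,
      δ ≤ ‖(x - cp j) / (1 - (starRingEnd ℂ) (cp j) * x)‖ := by
    intro j
    have hcpb : cp j ∈ ball (0 : ℂ) 1 := by
      rw [mem_ball_zero_iff]; exact hcp j
    have hProot : P.eval (cp j) = 0 := by
      rw [hPfac, Polynomial.eval_mul]
      apply mul_eq_zero_of_right
      rw [Polynomial.eval_prod]
      apply Finset.prod_eq_zero (Finset.mem_univ j)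
      simp
    have hder0 : deriv f (cp j) = 0 := by
      rw [hderiv (cp j) (le_of_lt (hcp j)), hProot]
      simp
    have hd1 := hfar (cp j) hcpb hder0
    by_contra hcon
    push_neg at hcon
    set t := ‖(x - cp j) / (1 - (starRingEnd ℂ) (cp j) * x)‖ with ht
    have ht0 : 0 ≤ t := norm_nonneg _
    have hdd : diskDist x (cp j) = Real.log ((1 + t) / (1 - t)) := rfl
    have hd' : (1 : ℝ) ≤ d := by exact_mod_cast hd
    have hlog : Real.log ((1 + t) / (1 - t)) ≤ 32 * d * δ := by
      have h1 : (1 + t) / (1 - t) ≤ (1 + δ) / (1 - δ) := by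
        rw [div_le_div_iff₀ (by linarith) (by linarith)]
        nlinarith
      have h2 : Real.log ((1 + t) / (1 - t)) ≤ Real.log ((1 + δ) / (1 - δ)) := by
        apply Real.log_le_log (by apply div_pos <;> linarith) h1
      have h3 : Real.log ((1 + δ) / (1 - δ)) ≤ (1 + δ) / (1 - δ) - 1 :=
        Real.log_le_sub_one_of_pos (by apply div_pos <;> linarith)
      have h4 : (1 + δ) / (1 - δ) - 1 ≤ 32 * d * δ := by
        rw [sub_le_iff_le_add, div_le_iff₀ (by linarith)]
        have hA : 0 ≤ ((d : ℝ) - 1) * δ * (1 - δ) :=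
          mul_nonneg (mul_nonneg (by linarith) hδ0.le) (by linarith)
        have hB : 0 ≤ δ * (1 / 4 - δ) := mul_nonneg hδ0.le (by linarith)
        nlinarith [hA, hB]
      linarith
    rw [hdd] at hd1
    linarith
  set AP : ℕ → Polynomial ℂ := fun i => (∏ j ∈ Finset.range i, (X - Polynomial.C (b j))) *
      ∏ j ∈ Finset.Ico (i + 1) d, (1 - Polynomial.C ((starRingEnd ℂ) (b j)) * X) with hAPdef
  set Sf : ℂ → ℝ := fun z =>
    ∑ i ∈ Finset.range d, lam i * Complex.normSq ((AP i).eval z) with hSdef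
  have habsx : ‖x‖ < 1 := by
    rwa [mem_ball_zero_iff] at hx
  have hSxpos : 0 < Sf x := by
    rw [hSdef]
    refine Finset.sum_pos' (fun i _ => mul_nonneg (hlam i).le (Complex.normSq_nonneg _))
      ⟨0, by simp [hdm], ?_⟩
    refine mul_pos (hlam 0) ?_
    rw [Complex.normSq_pos, hAPdef]
    simp only [Finset.range_zero, Finset.prod_empty, one_mul, Polynomial.eval_prod]
    refine Finset.prod_ne_zero_iff.mpr fun j _ => ?_
    simp only [Polynomial.eval_sub, Polynomial.eval_one, Polynomial.eval_mul, Polynomial.eval_C,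
      Polynomial.eval_X]
    exact one_sub_conj_mul_ne_zero (hb j) habsx.le
  set RP : Polynomial ℂ :=
    ∏ j : Fin m, (1 - Polynomial.C ((starRingEnd ℂ) (cp j)) * X) with hRPdef
  have hRPne : ∀ z : ℂ, ‖z‖ ≤ 1 → RP.eval z ≠ 0 := by
    intro z hz
    rw [hRPdef, Polynomial.eval_prod]
    refine Finset.prod_ne_zero_iff.mpr fun j _ => ?_
    simp only [Polynomial.eval_sub, Polynomial.eval_one, Polynomial.eval_mul, Polynomial.eval_C,
      Polynomial.eval_X]
    exact one_sub_conj_mul_ne_zero (hcp j) hz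
  have hcircleS : ∀ z : ℂ, ‖z‖ = 1 → Sf z = κ * Complex.normSq (RP.eval z) := by
    intro z hz
    have hz0 : z ≠ 0 := by intro h; rw [h] at hz; simp at hz
    have hnz : Complex.normSq z = 1 := by rw [← Complex.sq_norm, hz]; norm_num
    have hzsq : ∀ w : ℂ, Complex.normSq (1 - (starRingEnd ℂ) w * z) = Complex.normSq (z - w) := by
      intro w
      rw [circle_conj_eq hz w, Complex.normSq_mul, hnz, one_mul, Complex.normSq_conj]
    have hAPz : ∀ i ∈ Finset.range d, Complex.normSq ((AP i).eval z)
        = ∏ j ∈ (Finset.range d).erase i, Complex.normSq (z - b j) := by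
      intro i hi
      rw [hAPdef]
      simp only [Polynomial.eval_mul, Polynomial.eval_prod, Polynomial.eval_sub,
        Polynomial.eval_X, Polynomial.eval_C, Polynomial.eval_one]
      rw [Complex.normSq_mul, map_prod Complex.normSq, map_prod Complex.normSq,
        erase_range_split _ (Finset.mem_range.mp hi)]
      congr 1
      exact Finset.prod_congr rfl fun j _ => hzsq (b j)
    have h1 : P.eval z = ((Sf z : ℝ) : ℂ) * z ^ m := by
      rw [hPeval z hz]
      congr 2
      rw [hSdef]
      exact (Finset.sum_congr rfl fun i hi => by rw [hAPz i hi]).symm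
    have h2 : P.eval z = ((κ * Complex.normSq (RP.eval z) : ℝ) : ℂ) * z ^ m := by
      rw [hPfac, Polynomial.eval_mul, Polynomial.eval_C, Polynomial.eval_prod]
      have hfac2 : ∀ j ∈ (Finset.univ : Finset (Fin m)),
          Polynomial.eval z ((X - Polynomial.C (cp j)) *
            (1 - Polynomial.C ((starRingEnd ℂ) (cp j)) * X))
            = z * ((Complex.normSq (z - cp j) : ℝ) : ℂ) := by
        intro j _
        simpa using circle_factor hz (cp j)
      rw [Finset.prod_congr rfl hfac2, Finset.prod_mul_distrib, Finset.prod_const,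
        Finset.card_univ, Fintype.card_fin]
      have h3 : Complex.normSq (RP.eval z) = ∏ j : Fin m, Complex.normSq (z - cp j) := by
        rw [hRPdef, Polynomial.eval_prod, map_prod Complex.normSq]
        refine Finset.prod_congr rfl fun j _ => ?_
        simpa using hzsq (cp j)
      rw [h3]
      push_cast
      ring
    have h4 : ((Sf z : ℝ) : ℂ) = ((κ * Complex.normSq (RP.eval z) : ℝ) : ℂ) :=
      mul_right_cancel₀ (pow_ne_zero m hz0) (h1.symm.trans h2)
    exact_mod_cast h4
  have hSle : Sf x ≤ κ * Complex.normSq (RP.eval x) := by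
    set GP : Polynomial ℂ := ∑ i ∈ Finset.range d,
      Polynomial.C ((lam i : ℂ) * (starRingEnd ℂ) ((AP i).eval x)) * AP i with hGPdef
    have hGx : GP.eval x = ((Sf x : ℝ) : ℂ) := by
      rw [hGPdef, Polynomial.eval_finset_sum, hSdef]
      push_cast
      refine Finset.sum_congr rfl fun i _ => ?_
      rw [Polynomial.eval_mul, Polynomial.eval_C, mul_assoc, ← Complex.normSq_eq_conj_mul_self]
    have hbound : ∀ z ∈ frontier (ball (0 : ℂ) 1),
        ‖GP.eval z / RP.eval z‖ ≤ Real.sqrt (Sf x) * Real.sqrt κ := by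
      intro z hzf
      rw [frontier_ball (0 : ℂ) one_ne_zero, mem_sphere_zero_iff_norm] at hzf
      have hzS := hcircleS z hzf
      have hSznn : 0 ≤ Sf z := by
        rw [hzS]; exact mul_nonneg hκ.le (Complex.normSq_nonneg _)
      have hGz : ‖GP.eval z‖ ≤ Real.sqrt (Sf x) * Real.sqrt (Sf z) := by
        rw [hGPdef, Polynomial.eval_finset_sum]
        refine le_trans (norm_sum_le _ _) ?_
        have hterm : ∀ i ∈ Finset.range d,
            ‖Polynomial.eval z (Polynomial.C ((lam i : ℂ)
                * (starRingEnd ℂ) ((AP i).eval x)) * AP i)‖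
              = lam i * (‖(AP i).eval x‖ * ‖(AP i).eval z‖) := by
          intro i _
          rw [Polynomial.eval_mul, Polynomial.eval_C, norm_mul, norm_mul,
            Complex.norm_conj, Complex.norm_of_nonneg (hlam i).le, mul_assoc]
        rw [Finset.sum_congr rfl hterm]
        have hCS := Finset.sum_sq_le_sum_mul_sum_of_sq_eq_mul (Finset.range d)
          (r := fun i => lam i * (‖(AP i).eval x‖ * ‖(AP i).eval z‖))
          (f := fun i => lam i * Complex.normSq ((AP i).eval x))
          (g := fun i => lam i * Complex.normSq ((AP i).eval z))
          (fun i _ => mul_nonneg (hlam i).le (Complex.normSq_nonneg _))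
          (fun i _ => mul_nonneg (hlam i).le (Complex.normSq_nonneg _))
          (fun i _ => by
            beta_reduce
            rw [← Complex.sq_norm ((AP i).eval x), ← Complex.sq_norm ((AP i).eval z)]
            ring)
        have hrnn : 0 ≤ ∑ i ∈ Finset.range d,
            lam i * (‖(AP i).eval x‖ * ‖(AP i).eval z‖) :=
          Finset.sum_nonneg fun i _ => mul_nonneg (hlam i).le
            (mul_nonneg (norm_nonneg _) (norm_nonneg _))
        calc ∑ i ∈ Finset.range d,
            lam i * (‖(AP i).eval x‖ * ‖(AP i).eval z‖)
            = Real.sqrt ((∑ i ∈ Finset.range d,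
                lam i * (‖(AP i).eval x‖ * ‖(AP i).eval z‖)) ^ 2) :=
              (Real.sqrt_sq hrnn).symm
          _ ≤ Real.sqrt (Sf x * Sf z) := Real.sqrt_le_sqrt (by
              rw [hSdef]
              exact hCS)
          _ = Real.sqrt (Sf x) * Real.sqrt (Sf z) := Real.sqrt_mul hSxpos.le _
      have hRz : RP.eval z ≠ 0 := hRPne z (le_of_eq hzf)
      have hsqrtSz : Real.sqrt (Sf z) = Real.sqrt κ * ‖RP.eval z‖ := by
        rw [hzS, Real.sqrt_mul hκ.le, Complex.norm_def]
      rw [norm_div, div_le_iff₀ (by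
        exact (norm_pos_iff.mpr hRz))]
      calc ‖GP.eval z‖ ≤ Real.sqrt (Sf x) * Real.sqrt (Sf z) := hGz
        _ = Real.sqrt (Sf x) * Real.sqrt κ * ‖RP.eval z‖ := by
            rw [hsqrtSz]; ring
    have hdiff : DiffContOnCl ℂ (fun z => GP.eval z / RP.eval z) (ball 0 1) := by
      refine DifferentiableOn.diffContOnCl ?_
      rw [closure_ball (0 : ℂ) one_ne_zero]
      refine DifferentiableOn.div (GP.differentiable.differentiableOn)
        (RP.differentiable.differentiableOn) ?_
      intro z hzc
      exact hRPne z (by rwa [mem_closedBall_zero_iff] at hzc)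
    have hmax := Complex.norm_le_of_forall_mem_frontier_norm_le isBounded_ball hdiff hbound
      (subset_closure hx)
    have hRx : RP.eval x ≠ 0 := hRPne x habsx.le
    rw [norm_div, div_le_iff₀ (norm_pos_iff.mpr hRx)] at hmax
    rw [hGx] at hmax
    have hGxnorm : ‖((Sf x : ℝ) : ℂ)‖ = Sf x := by
      rw [Complex.norm_of_nonneg hSxpos.le]
    rw [hGxnorm] at hmax
    have hRxnorm : ‖RP.eval x‖ = Real.sqrt (Complex.normSq (RP.eval x)) := by
      rw [Complex.norm_def]
    rw [hRxnorm] at hmax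
    have h1 : Real.sqrt (Sf x) ≤ Real.sqrt κ * Real.sqrt (Complex.normSq (RP.eval x)) := by
      have hsx : Real.sqrt (Sf x) * Real.sqrt (Sf x) = Sf x := Real.mul_self_sqrt hSxpos.le
      have hsxpos : 0 < Real.sqrt (Sf x) := Real.sqrt_pos.mpr hSxpos
      nlinarith [hmax]
    calc Sf x = Real.sqrt (Sf x) * Real.sqrt (Sf x) := (Real.mul_self_sqrt hSxpos.le).symm
      _ ≤ (Real.sqrt κ * Real.sqrt (Complex.normSq (RP.eval x)))
          * (Real.sqrt κ * Real.sqrt (Complex.normSq (RP.eval x))) := by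
          refine mul_le_mul h1 h1 (Real.sqrt_nonneg _) ?_
          positivity
      _ = κ * Complex.normSq (RP.eval x) := by
          rw [mul_mul_mul_comm, Real.mul_self_sqrt hκ.le,
            Real.mul_self_sqrt (Complex.normSq_nonneg _)]
  have hId1 : (1 - Complex.normSq (f x)) * Complex.normSq (DP.eval x)
      = (1 - Complex.normSq x) * Sf x := by
    have hvpos : ∀ k : ℕ, 0 < Complex.normSq (1 - (starRingEnd ℂ) (b k) * x) := fun k =>
      Complex.normSq_pos.mpr (one_sub_conj_mul_ne_zero (hb k) habsx.le)
    have hvprodpos : 0 < ∏ k ∈ Finset.range d, Complex.normSq (1 - (starRingEnd ℂ) (b k) * x) :=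
      Finset.prod_pos fun k _ => hvpos k
    have hDPv : Complex.normSq (DP.eval x)
        = ∏ k ∈ Finset.range d, Complex.normSq (1 - (starRingEnd ℂ) (b k) * x) := by
      rw [hDPdef, Polynomial.eval_prod, map_prod Complex.normSq]
      refine Finset.prod_congr rfl fun k _ => ?_
      simp only [Polynomial.eval_sub, Polynomial.eval_one, Polynomial.eval_mul, Polynomial.eval_C, Polynomial.eval_X]
    have hNPu : Complex.normSq (NP.eval x) = ∏ k ∈ Finset.range d, Complex.normSq (x - b k) := by
      rw [hNPdef, Polynomial.eval_prod, map_prod Complex.normSq]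
      refine Finset.prod_congr rfl fun k _ => ?_
      simp only [Polynomial.eval_sub, Polynomial.eval_one, Polynomial.eval_mul, Polynomial.eval_C, Polynomial.eval_X]
    have hnormc : Complex.normSq c = 1 := by
      rw [← Complex.sq_norm, hc]; norm_num
    have hfxn : Complex.normSq (f x)
          * ∏ k ∈ Finset.range d, Complex.normSq (1 - (starRingEnd ℂ) (b k) * x)
        = ∏ k ∈ Finset.range d, Complex.normSq (x - b k) := by
      rw [hfX]
      simp only []
      rw [Complex.normSq_mul, Complex.normSq_div, hnormc, one_mul, hNPu, hDPv]
      rw [div_mul_cancel₀]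
      exact hvprodpos.ne'
    have hAPux : ∀ i : ℕ, Complex.normSq ((AP i).eval x)
        = (∏ k ∈ Finset.range i, Complex.normSq (x - b k))
          * ∏ k ∈ Finset.Ico (i + 1) d, Complex.normSq (1 - (starRingEnd ℂ) (b k) * x) := by
      intro i
      rw [hAPdef]
      simp only [Polynomial.eval_mul, Polynomial.eval_prod]
      rw [Complex.normSq_mul, map_prod Complex.normSq, map_prod Complex.normSq]
      congr 1
      · exact Finset.prod_congr rfl fun k _ => by
          simp only [Polynomial.eval_sub, Polynomial.eval_one, Polynomial.eval_mul, Polynomial.eval_C, Polynomial.eval_X]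
      · exact Finset.prod_congr rfl fun k _ => by
          simp only [Polynomial.eval_sub, Polynomial.eval_one, Polynomial.eval_mul, Polynomial.eval_C, Polynomial.eval_X]
    calc (1 - Complex.normSq (f x)) * Complex.normSq (DP.eval x)
        = (∏ k ∈ Finset.range d, Complex.normSq (1 - (starRingEnd ℂ) (b k) * x))
            - Complex.normSq (f x)
              * ∏ k ∈ Finset.range d, Complex.normSq (1 - (starRingEnd ℂ) (b k) * x) := by
          rw [hDPv]; ring
      _ = (∏ k ∈ Finset.range d, Complex.normSq (1 - (starRingEnd ℂ) (b k) * x))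
            - ∏ k ∈ Finset.range d, Complex.normSq (x - b k) := by rw [hfxn]
      _ = ∑ i ∈ Finset.range d, (Complex.normSq (1 - (starRingEnd ℂ) (b i) * x)
              - Complex.normSq (x - b i)) * (∏ k ∈ Finset.range i, Complex.normSq (x - b k))
            * ∏ k ∈ Finset.Ico (i + 1) d, Complex.normSq (1 - (starRingEnd ℂ) (b k) * x) :=
          telescope d _ _
      _ = ∑ i ∈ Finset.range d, (1 - Complex.normSq x) * (lam i
            * Complex.normSq ((AP i).eval x)) := by
          refine Finset.sum_congr rfl fun i _ => ?_
          rw [normSq_sub_identity (b i) x, hAPux i]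
          simp only [hlamdef]
          ring
      _ = (1 - Complex.normSq x) * Sf x := by
          rw [hSdef, Finset.mul_sum]
  -- final assembly
  have hV : 0 < Complex.normSq (DP.eval x) := Complex.normSq_pos.mpr (hDPne x habsx.le)
  have hxn : 0 < 1 - Complex.normSq x := by
    have h1 : Complex.normSq x < 1 := by
      rw [← Complex.sq_norm]
      nlinarith [norm_nonneg x]
    linarith
  have hfx1 : 1 - Complex.normSq (f x)
      = (1 - Complex.normSq x) * Sf x / Complex.normSq (DP.eval x) := by
    rw [eq_div_iff hV.ne']
    exact hId1
  have habsderiv : ‖deriv f x‖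
      = ‖P.eval x‖ / Complex.normSq (DP.eval x) := by
    rw [hderiv x habsx.le, norm_mul, hc, one_mul, norm_div, norm_pow, Complex.sq_norm]
  have hPx : ‖P.eval x‖
      = κ * ∏ j : Fin m, (‖x - cp j‖
          * ‖1 - (starRingEnd ℂ) (cp j) * x‖) := by
    rw [hPfac, Polynomial.eval_mul, Polynomial.eval_C, Polynomial.eval_prod, norm_mul,
      Complex.norm_prod]
    congr 1
    · rw [Complex.norm_of_nonneg hκ.le]
    · refine Finset.prod_congr rfl fun j _ => ?_
      simp only [Polynomial.eval_mul, Polynomial.eval_sub, Polynomial.eval_one,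
        Polynomial.eval_X, Polynomial.eval_C]
      rw [norm_mul]
  have hRPx : Complex.normSq (RP.eval x)
      = ∏ j : Fin m, Complex.normSq (1 - (starRingEnd ℂ) (cp j) * x) := by
    rw [hRPdef, Polynomial.eval_prod, map_prod Complex.normSq]
    refine Finset.prod_congr rfl fun j _ => ?_
    simp only [Polynomial.eval_sub, Polynomial.eval_one, Polynomial.eval_mul,
      Polynomial.eval_C, Polynomial.eval_X]
  have hb2 : ∀ j : Fin m, (1 : ℂ) - (starRingEnd ℂ) (cp j) * x ≠ 0 := fun j =>
    one_sub_conj_mul_ne_zero (hcp j) habsx.le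
  have hfinal : (1 - ‖x‖ ^ 2) / (1 - ‖f x‖ ^ 2)
      * ‖deriv f x‖ = ‖P.eval x‖ / Sf x := by
    rw [Complex.sq_norm, Complex.sq_norm, habsderiv, hfx1]
    field_simp
  rw [hfinal]
  have hstep1 : ‖P.eval x‖ / (κ * Complex.normSq (RP.eval x))
      ≤ ‖P.eval x‖ / Sf x := by
    apply div_le_div_of_nonneg_left (norm_nonneg _) hSxpos hSle
  have hstep2 : ‖P.eval x‖ / (κ * Complex.normSq (RP.eval x))
      = ∏ j : Fin m, ‖(x - cp j) / (1 - (starRingEnd ℂ) (cp j) * x)‖ := by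
    have hans : ∀ j ∈ (Finset.univ : Finset (Fin m)),
        ‖(x - cp j) / (1 - (starRingEnd ℂ) (cp j) * x)‖
          = ‖x - cp j‖ / ‖1 - (starRingEnd ℂ) (cp j) * x‖ :=
      fun j _ => norm_div _ _
    have hns : ∀ j ∈ (Finset.univ : Finset (Fin m)),
        Complex.normSq (1 - (starRingEnd ℂ) (cp j) * x)
          = ‖1 - (starRingEnd ℂ) (cp j) * x‖ ^ 2 :=
      fun j _ => (Complex.sq_norm _).symm
    rw [hPx, hRPx, Finset.prod_congr rfl hans, Finset.prod_congr rfl hns,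
      Finset.prod_div_distrib, Finset.prod_mul_distrib, Finset.prod_pow]
    have hBpos : 0 < ∏ j : Fin m, ‖1 - (starRingEnd ℂ) (cp j) * x‖ :=
      Finset.prod_pos fun j _ => norm_pos_iff.mpr (hb2 j)
    rw [div_eq_div_iff (by positivity) hBpos.ne']
    ring
  have hstep3 : (δ : ℝ) ^ m
      ≤ ∏ j : Fin m, ‖(x - cp j) / (1 - (starRingEnd ℂ) (cp j) * x)‖ := by
    have := Finset.prod_le_prod (s := Finset.univ) (f := fun _ : Fin m => δ)
      (g := fun j : Fin m => ‖(x - cp j) / (1 - (starRingEnd ℂ) (cp j) * x)‖)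
      (fun _ _ => hδ0.le) (fun j _ => hrho j)
    simpa using this
  calc δ ^ (d - 1) = δ ^ m := rfl
    _ ≤ ∏ j : Fin m, ‖(x - cp j) / (1 - (starRingEnd ℂ) (cp j) * x)‖ := hstep3
    _ = ‖P.eval x‖ / (κ * Complex.normSq (RP.eval x)) := hstep2.symm
    _ ≤ ‖P.eval x‖ / Sf x := hstep1
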